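/- Let p₁,…,pₙ be positive integers, and let L(p̄) be the abelian group generated by elements x₁,…,xₙ modulo the relations pᵢxᵢ = p₁x₁ for all i ≥ 2, and set c = p₁x₁. Then the quotient L(p̄)/ℤc is isomorphic to the direct sum ⊕ᵢ ℤ/pᵢℤ; in particular L(p̄) is a finitely generated abelian group of rank 1. -/

import Mathlib

open FreeAbelianGroup

/-- The relation subgroup of the free abelian group on `Fin (n+1)` generated by the
elements `pᵢ • xᵢ - p₀ • x₀` (the relations `pᵢxᵢ = p₁x₁`). -/
def relSubgroup (n : ℕ) (p : Fin (n + 1) → ℕ) : AddSubgroup (FreeAbelianGroup (Fin (n + 1))) :=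
  AddSubgroup.closure {g | ∃ i : Fin (n + 1), g = (p i : ℤ) • of i - (p 0 : ℤ) • of 0}

/-- `L(p̄)`, the abelian group generated by `x₁, …, xₙ` modulo `pᵢxᵢ = p₁x₁`. -/
def Lgroup (n : ℕ) (p : Fin (n + 1) → ℕ) : Type :=
  FreeAbelianGroup (Fin (n + 1)) ⧸ relSubgroup n p

instance (n : ℕ) (p : Fin (n + 1) → ℕ) : AddCommGroup (Lgroup n p) :=
  QuotientAddGroup.Quotient.addCommGroup _

/-- The image of `xᵢ` in `L(p̄)`. -/
def Lx (n : ℕ) (p : Fin (n + 1) → ℕ) (i : Fin (n + 1)) : Lgroup n p :=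
  QuotientAddGroup.mk (of i)

/-- The element `c = p₁x₁` of `L(p̄)`. -/
def Lc (n : ℕ) (p : Fin (n + 1) → ℕ) : Lgroup n p := (p 0 : ℤ) • Lx n p 0

/-- The subgroup generated by all `pᵢ • xᵢ`. -/
def bigSubgroup (n : ℕ) (p : Fin (n + 1) → ℕ) : AddSubgroup (FreeAbelianGroup (Fin (n + 1))) :=
  AddSubgroup.closure {g | ∃ i : Fin (n + 1), g = (p i : ℤ) • of i}

/-- The canonical map onto the direct sum of cyclic groups. -/
def phiHom (n : ℕ) (p : Fin (n + 1) → ℕ) :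
    FreeAbelianGroup (Fin (n + 1)) →+ DirectSum (Fin (n + 1)) (fun i => ZMod (p i)) :=
  FreeAbelianGroup.lift (fun i => DirectSum.of (fun i => ZMod (p i)) i 1)

lemma phiHom_of (n : ℕ) (p : Fin (n + 1) → ℕ) (i : Fin (n + 1)) :
    phiHom n p (of i) = DirectSum.of (fun i => ZMod (p i)) i 1 :=
  FreeAbelianGroup.lift_apply_of _ _

lemma phiHom_surjective (n : ℕ) (p : Fin (n + 1) → ℕ) :
    Function.Surjective (phiHom n p) := by
  intro y
  induction y using DirectSum.induction_on with
  | zero => exact ⟨0, map_zero _⟩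
  | of i x =>
    obtain ⟨m, rfl⟩ := ZMod.intCast_surjective (n := p i) x
    refine ⟨m • of i, ?_⟩
    rw [map_zsmul, phiHom_of, ← map_zsmul (DirectSum.of (fun i => ZMod (p i)) i)]
    congr 1
    simp [zsmul_eq_mul]
  | add x y hx hy =>
    obtain ⟨a, rfl⟩ := hx
    obtain ⟨b, rfl⟩ := hy
    exact ⟨a + b, map_add _ _ _⟩

lemma free_eq_sum (n : ℕ) (x : FreeAbelianGroup (Fin (n + 1))) :
    x = ∑ i : Fin (n + 1), (FreeAbelianGroup.toFinsupp x i) • of i := by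
  apply (FreeAbelianGroup.equivFinsupp (Fin (n + 1))).injective
  have hco : ∀ y, FreeAbelianGroup.equivFinsupp (Fin (n + 1)) y =
      FreeAbelianGroup.toFinsupp y := fun _ => rfl
  rw [map_sum, hco]
  conv_lhs => rw [← Finsupp.univ_sum_single (FreeAbelianGroup.toFinsupp x)]
  refine Finset.sum_congr rfl fun i _ => ?_
  rw [map_zsmul, hco, FreeAbelianGroup.toFinsupp_of, Finsupp.smul_single, smul_eq_mul, mul_one]

lemma ker_phiHom (n : ℕ) (p : Fin (n + 1) → ℕ) :
    (phiHom n p).ker = bigSubgroup n p := by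
  apply le_antisymm
  · intro x hx
    rw [AddMonoidHom.mem_ker] at hx
    set c : Fin (n + 1) → ℤ := fun i => FreeAbelianGroup.toFinsupp x i with hc
    have hxsum : x = ∑ i : Fin (n + 1), c i • of i := free_eq_sum n x
    have hphix : phiHom n p x =
        ∑ i : Fin (n + 1), DirectSum.of (fun i => ZMod (p i)) i ((c i : ZMod (p i))) := by
      rw [hxsum, map_sum]
      refine Finset.sum_congr rfl fun i _ => ?_
      rw [map_zsmul, phiHom_of, ← map_zsmul (DirectSum.of (fun i => ZMod (p i)) i)]
      congr 1
      simp [zsmul_eq_mul]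
    have hcomp : ∀ j : Fin (n + 1), ((c j : ZMod (p j))) = 0 := by
      intro j
      have h0 : (phiHom n p x) j = 0 := by rw [hx]; rfl
      rw [hphix, DFinsupp.finset_sum_apply] at h0
      rwa [Finset.sum_eq_single_of_mem j (Finset.mem_univ j)
        (fun i _ hij => DirectSum.of_eq_of_ne (β := fun i => ZMod (p i)) _ _ _ (Ne.symm hij)),
        DirectSum.of_eq_same] at h0
    have hdvd : ∀ j, ∃ k : ℤ, c j = (p j : ℤ) * k := by
      intro j
      have := (ZMod.intCast_zmod_eq_zero_iff_dvd (c j) (p j)).mp (hcomp j)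
      exact this
    choose k hk using hdvd
    have : x = ∑ i : Fin (n + 1), k i • ((p i : ℤ) • of i) := by
      rw [hxsum]
      refine Finset.sum_congr rfl fun i _ => ?_
      rw [smul_smul, mul_comm, ← hk i]
    rw [this, bigSubgroup]
    refine AddSubgroup.sum_mem _ fun i _ => AddSubgroup.zsmul_mem _ ?_ _
    exact AddSubgroup.subset_closure ⟨i, rfl⟩
  · rw [bigSubgroup, AddSubgroup.closure_le]
    rintro g ⟨i, rfl⟩
    show ((p i : ℤ) • of i) ∈ (phiHom n p).ker
    rw [AddMonoidHom.mem_ker, map_zsmul, phiHom_of,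
      ← map_zsmul (DirectSum.of (fun i => ZMod (p i)) i)]
    convert map_zero (DirectSum.of (fun i => ZMod (p i)) i)
    simp [zsmul_eq_mul]

theorem Lgroup_quotient_zmultiples_c_and_fg (n : ℕ) (p : Fin (n + 1) → ℕ)
    (hp : ∀ i, 0 < p i) :
    Nonempty ((Lgroup n p ⧸ AddSubgroup.zmultiples (Lc n p)) ≃+
        DirectSum (Fin (n + 1)) (fun i => ZMod (p i)))
      ∧ AddGroup.FG (Lgroup n p) := by
  constructor
  · have hle : relSubgroup n p ≤ bigSubgroup n p := by
      rw [relSubgroup, AddSubgroup.closure_le]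
      rintro g ⟨i, rfl⟩
      exact AddSubgroup.sub_mem _ (AddSubgroup.subset_closure ⟨i, rfl⟩)
        (AddSubgroup.subset_closure ⟨0, rfl⟩)
    have hLc : Lc n p = QuotientAddGroup.mk' (relSubgroup n p) ((p 0 : ℤ) • of 0) := by
      rw [Lc, Lx]
      rfl
    have hmap : AddSubgroup.map (QuotientAddGroup.mk' (relSubgroup n p)) (bigSubgroup n p) =
        AddSubgroup.zmultiples (Lc n p) := by
      rw [bigSubgroup, AddMonoidHom.map_closure, AddSubgroup.zmultiples_eq_closure]
      congr 1
      ext y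
      simp only [Set.mem_image, Set.mem_setOf_eq, Set.mem_singleton_iff]
      constructor
      · rintro ⟨g, ⟨i, rfl⟩, rfl⟩
        rw [hLc]; refine (QuotientAddGroup.mk'_eq_mk' _).mpr ?_
        refine ⟨-((p i : ℤ) • of i - (p 0 : ℤ) • of 0), ?_, by abel⟩
        exact AddSubgroup.neg_mem _ (AddSubgroup.subset_closure ⟨i, rfl⟩)
      · rintro rfl
        exact ⟨(p 0 : ℤ) • of 0, ⟨0, rfl⟩, hLc.symm⟩
    have e1 : (Lgroup n p ⧸ AddSubgroup.zmultiples (Lc n p)) ≃+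
        (FreeAbelianGroup (Fin (n + 1)) ⧸ bigSubgroup n p) := by
      rw [← hmap]
      exact QuotientAddGroup.quotientQuotientEquivQuotient (relSubgroup n p) (bigSubgroup n p) hle
    have e2 : (FreeAbelianGroup (Fin (n + 1)) ⧸ bigSubgroup n p) ≃+
        DirectSum (Fin (n + 1)) (fun i => ZMod (p i)) := by
      rw [← ker_phiHom n p]
      exact QuotientAddGroup.quotientKerEquivOfSurjective _ (phiHom_surjective n p)
    exact ⟨e1.trans e2⟩
  · have hfg : AddGroup.FG (FreeAbelianGroup (Fin (n + 1))) := by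
      rw [AddGroup.fg_iff]
      refine ⟨Set.range of, ?_, Set.finite_range _⟩
      rw [eq_top_iff]
      intro x hx
      clear hx
      induction x using FreeAbelianGroup.induction_on with
      | zero => exact AddSubgroup.zero_mem _
      | of i => exact AddSubgroup.subset_closure (Set.mem_range_self i)
      | neg i _ => exact AddSubgroup.neg_mem _ (AddSubgroup.subset_closure (Set.mem_range_self i))
      | add a b ha hb => exact AddSubgroup.add_mem _ ha hb
    exact @AddGroup.fg_of_surjective _ _ _ _ hfg (QuotientAddGroup.mk' (relSubgroup n p))
      (QuotientAddGroup.mk'_surjective _)
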